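/- (Lemma 3.3(ii)) Let a, b, c be real with a·c·(b²−4ac) ≠ 0 and write D = b²−4ac. Define a₁(h) = (4/5)h − (12ac+b²+16ab+16a²)/(15aD), a₂(h) = −b/(9a) − 2/9, a₃(h) = (4(b+2a)/(5D))·h + (b+2a)/(5aD), a₄(h) = (4/3)h + 1/(3a), and G₂(h) = (4/(15a))·(4ah+1)·(h − (a+b+c)/D). Let Σ ⊆ ℝ be an open interval with G₂(h) ≠ 0 for all h ∈ Σ, and let I₁₁, I₁₃ : Σ → ℝ be differentiable functions with I₁₁(h) ≠ 0 on Σ, satisfying the Picard–Fuchs system I₁₁ = ((4/3)h + 1/(3a))·I₁₁' + (b/(9a) + 2/9)·I₁₃' and I₁₃ = (−(4(b+2a)/(5D))·h − (b+2a)/(5aD))·I₁₁' + ((4/5)h − (12ac+b²+16ab+16a²)/(15aD))·I₁₃' on Σ. Then ω₂ := I₁₃/I₁₁ is differentiable on Σ and satisfies the Riccati equation G₂(h)·ω₂'(h) = −a₂(h)·ω₂(h)² + (a₄(h) − a₁(h))·ω₂(h) + a₃(h) for all h ∈ Σ. -/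

import Mathlib

noncomputable def G2 (a b c h : ℝ) : ℝ :=
  (4 / (15 * a)) * (4 * a * h + 1) * (h - (a + b + c) / (b ^ 2 - 4 * a * c))

noncomputable def a1 (a b c h : ℝ) : ℝ :=
  (4 / 5) * h - (12 * a * c + b ^ 2 + 16 * a * b + 16 * a ^ 2) / (15 * a * (b ^ 2 - 4 * a * c))

noncomputable def a2 (a b : ℝ) : ℝ := -(b / (9 * a)) - 2 / 9

noncomputable def a3 (a b c h : ℝ) : ℝ :=
  (4 * (b + 2 * a) / (5 * (b ^ 2 - 4 * a * c))) * h + (b + 2 * a) / (5 * a * (b ^ 2 - 4 * a * c))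

noncomputable def a4 (a h : ℝ) : ℝ := (4 / 3) * h + 1 / (3 * a)

set_option maxHeartbeats 2000000 in
theorem stmt17 (a b c : ℝ) (habc : a * c * (b ^ 2 - 4 * a * c) ≠ 0)
    (S : Set ℝ) (hSo : IsOpen S) (hSc : Convex ℝ S)
    (hG : ∀ h ∈ S, G2 a b c h ≠ 0)
    (I11 I13 : ℝ → ℝ)
    (hI11 : ∀ h ∈ S, DifferentiableAt ℝ I11 h)
    (hI13 : ∀ h ∈ S, DifferentiableAt ℝ I13 h)
    (hne : ∀ h ∈ S, I11 h ≠ 0)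
    (hPF1 : ∀ h ∈ S, I11 h = ((4 / 3) * h + 1 / (3 * a)) * deriv I11 h
        + (b / (9 * a) + 2 / 9) * deriv I13 h)
    (hPF2 : ∀ h ∈ S, I13 h =
        (-(4 * (b + 2 * a) / (5 * (b ^ 2 - 4 * a * c))) * h
            - (b + 2 * a) / (5 * a * (b ^ 2 - 4 * a * c))) * deriv I11 h
        + ((4 / 5) * h
            - (12 * a * c + b ^ 2 + 16 * a * b + 16 * a ^ 2)
              / (15 * a * (b ^ 2 - 4 * a * c))) * deriv I13 h) :
    ∀ ω : ℝ → ℝ, (∀ h : ℝ, ω h = I13 h / I11 h) →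
      ∀ h ∈ S, DifferentiableAt ℝ ω h ∧
        G2 a b c h * deriv ω h =
          -(a2 a b) * (ω h) ^ 2 + (a4 a h - a1 a b c h) * ω h + a3 a b c h := by
  intro w hw h hs
  have ha : a ≠ 0 := by intro h0; apply habc; rw [h0]; ring
  have hD : b ^ 2 - 4 * a * c ≠ 0 := by intro h0; apply habc; rw [h0]; ring
  have hX : I11 h ≠ 0 := hne h hs
  have hweq : w = fun x => I13 x / I11 x := funext hw
  have hdiff : DifferentiableAt ℝ w h := by
    rw [hweq]; exact (hI13 h hs).div (hI11 h hs) hX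
  refine ⟨hdiff, ?_⟩
  have hderiv : deriv w h =
      (deriv I13 h * I11 h - I13 h * deriv I11 h) / (I11 h) ^ 2 := by
    rw [hweq]; exact deriv_div (hI13 h hs) (hI11 h hs) hX
  rw [hderiv, hw h]
  set u := deriv I11 h with hu
  set v := deriv I13 h with hv
  have hdet : a1 a b c h * a4 a h - a2 a b * a3 a b c h = G2 a b c h := by
    simp only [a1, a2, a3, a4, G2]
    field_simp
    ring
  set A1 := a1 a b c h
  set A2 := a2 a b
  set A3 := a3 a b c h
  set A4 := a4 a h
  set X := A4 * u - A2 * v with hXdef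
  set Y := -A3 * u + A1 * v with hYdef
  have e1 : I11 h = X := by
    rw [hPF1 h hs, hXdef]; simp only [A2, A4, a2, a4]; ring
  have e2 : I13 h = Y := by
    rw [hPF2 h hs, hYdef]; simp only [A1, A3, a1, a3]; ring
  rw [e1] at hX
  rw [e1, e2]
  have key : G2 a b c h * (v * X - Y * u) =
      -A2 * Y ^ 2 + (A4 - A1) * (Y * X) + A3 * X ^ 2 := by
    rw [← hdet, hXdef, hYdef]; ring
  have hX2 : X ^ 2 ≠ 0 := pow_ne_zero _ hX
  have hr : -A2 * (Y / X) ^ 2 + (A4 - A1) * (Y / X) + A3 =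
      (-A2 * Y ^ 2 + (A4 - A1) * (Y * X) + A3 * X ^ 2) / X ^ 2 := by
    field_simp
  rw [hr, ← key, mul_div_assoc]
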